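/- Let p be a positive even integer, let k ≥ 2 be an integer, and let 0 < a < 1/k. For each n ≥ 1 let f_n(x) = ∑_{0 ≤ ν < n, k | ν} e^{2πiνx} (the convolution of the Dirichlet kernel D_n with the average μ_k of the Dirac masses at the k-th roots of unity). Then the ratio (∫_{-a}^{a} |f_n(x)|^p dx) / (∫_{-1/2}^{1/2} |f_n(x)|^p dx) tends to 1/k as n → ∞. -/

import Mathlib

open MeasureTheory Finset Filter

private noncomputable def Dker (m : ℕ) (u : ℝ) : ℂ :=
  ∑ j ∈ Finset.range m, Complex.exp (2 * Real.pi * Complex.I * (j : ℂ) * (u : ℂ))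

private lemma arg_eq (t : ℝ) :
    2 * (Real.pi : ℂ) * Complex.I * (t : ℂ) = ((2 * Real.pi * t : ℝ) : ℂ) * Complex.I := by
  push_cast; ring

private lemma Dker_continuous (m : ℕ) : Continuous (Dker m) := by
  unfold Dker
  exact continuous_finset_sum _ fun j _ => Complex.continuous_exp.comp (by fun_prop)

private lemma Dker_periodic (m : ℕ) : Function.Periodic (Dker m) 1 := by
  intro u
  unfold Dker
  refine Finset.sum_congr rfl fun j _ => ?_
  push_cast
  rw [show 2 * (Real.pi:ℂ) * Complex.I * (j:ℂ) * ((u:ℂ) + 1)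
      = 2 * Real.pi * Complex.I * (j:ℂ) * (u:ℂ) + (j:ℂ) * (2 * Real.pi * Complex.I) by ring,
    Complex.exp_add, Complex.exp_nat_mul_two_pi_mul_I, mul_one]

private lemma Dker_eq_geom (m : ℕ) (u : ℝ) :
    Dker m u = ∑ j ∈ Finset.range m, (Complex.exp (2 * Real.pi * Complex.I * (u:ℂ))) ^ j := by
  unfold Dker
  refine Finset.sum_congr rfl fun j _ => ?_
  rw [← Complex.exp_nat_mul]
  congr 1
  ring

private lemma Dker_re (m : ℕ) (u : ℝ) :
    (Dker m u).re = ∑ j ∈ Finset.range m, Real.cos (2 * Real.pi * j * u) := by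
  unfold Dker
  rw [Complex.re_sum]
  refine Finset.sum_congr rfl fun j _ => ?_
  rw [show 2 * (Real.pi:ℂ) * Complex.I * (j:ℂ) * (u:ℂ)
      = ((2 * Real.pi * j * u : ℝ) : ℂ) * Complex.I by push_cast; ring,
    Complex.exp_ofReal_mul_I_re]

private lemma Dker_norm_ge (m : ℕ) (hm : 1 ≤ m) {u : ℝ} (h : |u| ≤ 1 / (6 * m)) :
    (m : ℝ) / 2 ≤ ‖Dker m u‖ := by
  have hπ := Real.pi_pos
  have hm0 : (0:ℝ) < m := by exact_mod_cast hm
  have hre : (m : ℝ) / 2 ≤ (Dker m u).re := by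
    rw [Dker_re]
    have key : ∀ j ∈ Finset.range m, (1:ℝ)/2 ≤ Real.cos (2 * Real.pi * j * u) := by
      intro j hj
      rw [Finset.mem_range] at hj
      have hj' : (j:ℝ) ≤ m := by exact_mod_cast hj.le
      have habs : |2 * Real.pi * j * u| ≤ Real.pi / 3 := by
        have h1 : |2 * Real.pi * j * u| = 2 * Real.pi * j * |u| := by
          rw [abs_mul]
          have : |2 * Real.pi * (j:ℝ)| = 2 * Real.pi * j := by
            rw [abs_of_nonneg]; positivity
          rw [this]
        rw [h1]
        have : 2 * Real.pi * (j:ℝ) * |u| ≤ 2 * Real.pi * m * (1 / (6 * m)) := by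
          apply mul_le_mul (by nlinarith) h (abs_nonneg u) (by positivity)
        calc 2 * Real.pi * (j:ℝ) * |u| ≤ 2 * Real.pi * m * (1 / (6 * m)) := this
          _ = Real.pi / 3 := by field_simp; ring
      have := Real.cos_le_cos_of_nonneg_of_le_pi (abs_nonneg (2 * Real.pi * j * u))
        (by linarith : Real.pi / 3 ≤ Real.pi) habs
      rw [Real.cos_abs] at this
      calc (1:ℝ)/2 = Real.cos (Real.pi/3) := (Real.cos_pi_div_three).symm
        _ ≤ _ := this
    calc (m:ℝ)/2 = ∑ _j ∈ Finset.range m, (1:ℝ)/2 := by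
          rw [Finset.sum_const, Finset.card_range, nsmul_eq_mul]; ring
      _ ≤ _ := Finset.sum_le_sum key
  calc (m:ℝ)/2 ≤ (Dker m u).re := hre
    _ ≤ |(Dker m u).re| := le_abs_self _
    _ ≤ ‖Dker m u‖ := Complex.abs_re_le_norm _
    _ = ‖Dker m u‖ := rfl

private lemma cos_bound {d u : ℝ} (hd : 0 < d) (hd2 : d ≤ 1/2)
    (h1 : d ≤ |u|) (h2 : |u| ≤ 1 - d) :
    Real.cos (2 * Real.pi * u) ≤ Real.cos (2 * Real.pi * d) := by
  have hπ := Real.pi_pos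
  have habs : Real.cos (2 * Real.pi * u) = Real.cos (2 * Real.pi * |u|) := by
    rcases abs_cases u with ⟨h, _⟩ | ⟨h, _⟩
    · rw [h]
    · rw [h, show 2 * Real.pi * -u = -(2 * Real.pi * u) by ring, Real.cos_neg]
  rw [habs]
  rcases le_or_gt (|u|) (1/2) with hc | hc
  · exact Real.cos_le_cos_of_nonneg_of_le_pi (by positivity)
      (by nlinarith) (by nlinarith)
  · have : Real.cos (2 * Real.pi * |u|) = Real.cos (2 * Real.pi * (1 - |u|)) := by
      rw [show 2 * Real.pi * (1 - |u|) = 2 * Real.pi - 2 * Real.pi * |u| by ring,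
        Real.cos_two_pi_sub]
    rw [this]
    exact Real.cos_le_cos_of_nonneg_of_le_pi (by positivity)
      (by nlinarith) (by nlinarith)

private lemma one_sub_cos_pos {d : ℝ} (hd : 0 < d) (hd2 : d ≤ 1/2) :
    0 < 1 - Real.cos (2 * Real.pi * d) := by
  have hπ := Real.pi_pos
  have := Real.cos_lt_cos_of_nonneg_of_le_pi (le_refl (0:ℝ)) (by nlinarith : 2 * Real.pi * d ≤ Real.pi) (by positivity)
  rw [Real.cos_zero] at this
  linarith

private lemma Dker_norm_le {d u : ℝ} (hd : 0 < d) (hd2 : d ≤ 1/2)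
    (h1 : d ≤ |u|) (h2 : |u| ≤ 1 - d) (m : ℕ) :
    ‖Dker m u‖ ≤ 2 / (1 - Real.cos (2 * Real.pi * d)) := by
  have hpos := one_sub_cos_pos hd hd2
  set z : ℂ := Complex.exp (2 * Real.pi * Complex.I * (u:ℂ)) with hz
  have hzabs : ‖z‖ = 1 := by
    rw [hz, arg_eq, Complex.norm_exp_ofReal_mul_I]
  have hzre : z.re = Real.cos (2 * Real.pi * u) := by
    rw [hz, arg_eq, Complex.exp_ofReal_mul_I_re]
  have hlow : 1 - Real.cos (2 * Real.pi * d) ≤ ‖z - 1‖ := by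
    have h3 := cos_bound hd hd2 h1 h2
    calc 1 - Real.cos (2 * Real.pi * d) ≤ 1 - Real.cos (2 * Real.pi * u) := by linarith
      _ ≤ |(z - 1).re| := by
          rw [Complex.sub_re, Complex.one_re, hzre, abs_sub_comm]
          exact le_abs_self _
      _ ≤ ‖z - 1‖ := Complex.abs_re_le_norm _
      _ = ‖z - 1‖ := rfl
  have hzne : z ≠ 1 := by
    intro h
    rw [h, sub_self, norm_zero] at hlow
    linarith
  rw [Dker_eq_geom, ← hz, geom_sum_eq hzne, norm_div]
  have hnum : ‖z ^ m - 1‖ ≤ 2 := by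
    calc ‖z ^ m - 1‖ ≤ ‖z ^ m‖ + ‖(1:ℂ)‖ := norm_sub_le _ _
      _ = 2 := by
          rw [norm_pow]
          show (‖z‖) ^ m + ‖(1:ℂ)‖ = 2
          rw [hzabs]; norm_num
  exact div_le_div₀ (by norm_num) hnum hpos hlow

private lemma mul_lt_iff_lt_ceil {k : ℕ} (hk : 1 ≤ k) (n j : ℕ) :
    k * j < n ↔ j < (n + k - 1) / k := by
  rcases n with _ | n
  · simp [Nat.div_eq_of_lt (by omega : k - 1 < k)]
  · rw [show n + 1 + k - 1 = n + k by omega, Nat.add_div_right _ (by omega), Nat.lt_succ_iff,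
      Nat.lt_succ_iff, Nat.le_div_iff_mul_le (by omega), mul_comm]

private lemma filter_eq_image {k : ℕ} (hk : 1 ≤ k) (n : ℕ) :
    (Finset.range n).filter (fun ν => k ∣ ν) =
      (Finset.range ((n + k - 1) / k)).image (fun j => k * j) := by
  ext ν
  simp only [Finset.mem_filter, Finset.mem_range, Finset.mem_image]
  constructor
  · rintro ⟨hν, j, rfl⟩
    exact ⟨j, (mul_lt_iff_lt_ceil hk n j).1 hν, rfl⟩
  · rintro ⟨j, hj, rfl⟩
    exact ⟨(mul_lt_iff_lt_ceil hk n j).2 hj, j, rfl⟩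

private noncomputable def Ifun (p m : ℕ) : ℝ := ∫ u in (-(1/2):ℝ)..(1/2), ‖Dker m u‖ ^ p
private noncomputable def Sfun (p : ℕ) (b : ℝ) (m : ℕ) : ℝ := ∫ u in (-b)..b, ‖Dker m u‖ ^ p

private lemma Dker_int (p m : ℕ) : ∀ t₁ t₂ : ℝ,
    IntervalIntegrable (fun u => ‖Dker m u‖ ^ p) volume t₁ t₂ :=
  fun t₁ t₂ => ((Dker_continuous m).norm.pow p).intervalIntegrable t₁ t₂

private lemma err_bound (p : ℕ) {b : ℝ} (hb0 : 0 < b) (hb1 : b < 1) :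
    ∃ C : ℝ, 0 ≤ C ∧ ∀ m : ℕ, |Sfun p b m - Ifun p m| ≤ C := by
  set d : ℝ := min b (1 - b) with hd
  have hd0 : 0 < d := lt_min hb0 (by linarith)
  have hd2 : d ≤ 1/2 := by
    rcases le_total b (1/2) with h | h
    · exact le_trans (min_le_left _ _) h
    · exact le_trans (min_le_right _ _) (by linarith)
  set B : ℝ := 2 / (1 - Real.cos (2 * Real.pi * d)) with hB
  have hB0 : 0 ≤ B := le_of_lt (div_pos two_pos (one_sub_cos_pos hd0 hd2))
  have hBp : 0 ≤ B ^ p := pow_nonneg hB0 p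
  refine ⟨B ^ p, hBp, fun m => ?_⟩
  have hint := Dker_int p m
  have piece : ∀ s t : ℝ, s ≤ t → (∀ x ∈ Set.Icc s t, d ≤ |x| ∧ |x| ≤ 1 - d) →
      (0 ≤ ∫ u in s..t, ‖Dker m u‖ ^ p) ∧
        (∫ u in s..t, ‖Dker m u‖ ^ p) ≤ (t - s) * B ^ p := by
    intro s t hst hx
    refine ⟨intervalIntegral.integral_nonneg hst fun x _ => by positivity, ?_⟩
    have hmono := intervalIntegral.integral_mono_on hst (hint s t)
      (intervalIntegrable_const) (fun x hxm => by
        obtain ⟨hx1, hx2⟩ := hx x hxm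
        exact pow_le_pow_left₀ (norm_nonneg _) (Dker_norm_le hd0 hd2 hx1 hx2 m) p)
    calc (∫ u in s..t, ‖Dker m u‖ ^ p) ≤ ∫ _u in s..t, B ^ p := hmono
      _ = (t - s) * B ^ p := by rw [intervalIntegral.integral_const, smul_eq_mul]
  unfold Sfun Ifun
  rcases le_total b (1/2) with hb | hb
  · have hdb : d = b := min_eq_left (by linarith)
    have split1 : (∫ u in (-(1/2):ℝ)..(1/2), ‖Dker m u‖ ^ p)
        = (∫ u in (-(1/2):ℝ)..(-b), ‖Dker m u‖ ^ p) + (∫ u in (-b)..(1/2:ℝ), ‖Dker m u‖ ^ p) :=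
      (intervalIntegral.integral_add_adjacent_intervals (hint _ _) (hint _ _)).symm
    have split2 : (∫ u in (-b)..(1/2:ℝ), ‖Dker m u‖ ^ p)
        = (∫ u in (-b)..b, ‖Dker m u‖ ^ p) + (∫ u in b..(1/2:ℝ), ‖Dker m u‖ ^ p) :=
      (intervalIntegral.integral_add_adjacent_intervals (hint _ _) (hint _ _)).symm
    obtain ⟨hP1n, hP1⟩ := piece (-(1/2)) (-b) (by linarith) (fun x hx => by
      obtain ⟨hx1, hx2⟩ := hx
      rw [hdb, abs_of_nonpos (by linarith)]
      constructor <;> linarith)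
    obtain ⟨hP2n, hP2⟩ := piece b (1/2) (by linarith) (fun x hx => by
      obtain ⟨hx1, hx2⟩ := hx
      rw [hdb, abs_of_nonneg (by linarith)]
      constructor <;> linarith)
    rw [abs_le]
    constructor <;> nlinarith [mul_nonneg hb0.le hBp]
  · have hdb : d = 1 - b := min_eq_right (by linarith)
    have split1 : (∫ u in (-b)..b, ‖Dker m u‖ ^ p)
        = (∫ u in (-b)..(-(1/2):ℝ), ‖Dker m u‖ ^ p) + (∫ u in (-(1/2):ℝ)..b, ‖Dker m u‖ ^ p) :=
      (intervalIntegral.integral_add_adjacent_intervals (hint _ _) (hint _ _)).symm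
    have split2 : (∫ u in (-(1/2):ℝ)..b, ‖Dker m u‖ ^ p)
        = (∫ u in (-(1/2):ℝ)..(1/2:ℝ), ‖Dker m u‖ ^ p) + (∫ u in (1/2:ℝ)..b, ‖Dker m u‖ ^ p) :=
      (intervalIntegral.integral_add_adjacent_intervals (hint _ _) (hint _ _)).symm
    obtain ⟨hP1n, hP1⟩ := piece (-b) (-(1/2)) (by linarith) (fun x hx => by
      obtain ⟨hx1, hx2⟩ := hx
      rw [hdb, abs_of_nonpos (by linarith)]
      constructor <;> linarith)
    obtain ⟨hP2n, hP2⟩ := piece (1/2) b (by linarith) (fun x hx => by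
      obtain ⟨hx1, hx2⟩ := hx
      rw [hdb, abs_of_nonneg (by linarith)]
      constructor <;> linarith)
    rw [abs_le]
    constructor <;> nlinarith [mul_nonneg (by linarith : (0:ℝ) ≤ 1 - b) hBp]

private lemma I_lower (p : ℕ) (hp : 1 ≤ p) (m : ℕ) (hm : 1 ≤ m) :
    ((m:ℝ)) ^ (p - 1) / (3 * 2 ^ p) ≤ Ifun p m := by
  have hm0 : (0:ℝ) < m := by exact_mod_cast hm
  set c : ℝ := 1 / (6 * m) with hc
  have hc0 : 0 < c := by positivity
  have hc2 : c ≤ 1/2 := by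
    have hm1 : (1:ℝ) ≤ m := by exact_mod_cast hm
    rw [hc, div_le_div_iff₀ (by positivity) two_pos]
    nlinarith
  have hint := Dker_int p m
  have step1 : (∫ u in (-c)..c, ‖Dker m u‖ ^ p) ≤ Ifun p m := by
    unfold Ifun
    exact intervalIntegral.integral_mono_interval (by linarith) (by linarith) (by linarith)
      (ae_of_all _ fun x => by positivity) (hint _ _)
  have step2 : ((m:ℝ)/2) ^ p * (2 * c) ≤ ∫ u in (-c)..c, ‖Dker m u‖ ^ p := by
    have hmono := intervalIntegral.integral_mono_on (f := fun _ => ((m:ℝ)/2) ^ p)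
      (g := fun u => ‖Dker m u‖ ^ p) (μ := volume) (by linarith : -c ≤ c)
      (intervalIntegrable_const) (hint _ _) (fun x hx => by
        refine pow_le_pow_left₀ (by positivity) ?_ p
        exact Dker_norm_ge m hm (abs_le.mpr ⟨hx.1, hx.2⟩))
    calc ((m:ℝ)/2) ^ p * (2 * c) = (c - -c) • (((m:ℝ)/2) ^ p) := by rw [smul_eq_mul]; ring
      _ = ∫ _u in (-c)..c, ((m:ℝ)/2) ^ p := (intervalIntegral.integral_const _).symm
      _ ≤ _ := hmono
  have halg : ((m:ℝ)) ^ (p - 1) / (3 * 2 ^ p) = ((m:ℝ)/2) ^ p * (2 * c) := by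
    have hmp : (m:ℝ) ^ p = (m:ℝ) ^ (p - 1) * m := by
      rw [← pow_succ]; congr 1; omega
    rw [hc, div_pow, hmp]
    field_simp
    ring
  rw [halg]
  exact le_trans step2 step1

private lemma R_tendsto (p : ℕ) (hp2 : 2 ≤ p) {b : ℝ} (hb0 : 0 < b) (hb1 : b < 1)
    (k : ℝ) (hk : 0 < k) :
    Tendsto (fun m : ℕ => (k⁻¹ * Sfun p b m) / Ifun p m) atTop (nhds (1/k)) := by
  obtain ⟨C, hC0, hCb⟩ := err_bound p hb0 hb1
  have hIpos : ∀ m : ℕ, 1 ≤ m → 0 < Ifun p m := fun m hm => by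
    have hm0 : (0:ℝ) < m := by exact_mod_cast hm
    exact lt_of_lt_of_le (by positivity) (I_lower p (by omega) m hm)
  have hq : Tendsto (fun m : ℕ => (Sfun p b m - Ifun p m) / Ifun p m) atTop (nhds 0) := by
    apply squeeze_zero_norm' (a := fun m : ℕ => (3 * 2 ^ p * C) / (m:ℝ))
    · filter_upwards [eventually_ge_atTop 1] with m hm
      have hm0 : (0:ℝ) < m := by exact_mod_cast hm
      have hm1 : (1:ℝ) ≤ m := by exact_mod_cast hm
      have hIl := I_lower p (by omega) m hm
      have hIp := hIpos m hm
      have hmp : (m:ℝ) ≤ (m:ℝ) ^ (p - 1) := by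
        calc (m:ℝ) = (m:ℝ) ^ 1 := (pow_one _).symm
          _ ≤ (m:ℝ) ^ (p - 1) := pow_le_pow_right₀ hm1 (by omega)
      rw [Real.norm_eq_abs, abs_div, abs_of_pos hIp]
      calc |Sfun p b m - Ifun p m| / Ifun p m
          ≤ C / ((m:ℝ) ^ (p - 1) / (3 * 2 ^ p)) :=
            div_le_div₀ hC0 (hCb m) (by positivity) hIl
        _ = (3 * 2 ^ p * C) / (m:ℝ) ^ (p - 1) := by
            field_simp
        _ ≤ (3 * 2 ^ p * C) / (m:ℝ) := by
            apply div_le_div_of_nonneg_left (by positivity) hm0 hmp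
    · exact tendsto_const_nhds.div_atTop tendsto_natCast_atTop_atTop
  have key : Tendsto (fun m : ℕ => 1/k * (1 + (Sfun p b m - Ifun p m) / Ifun p m))
      atTop (nhds (1/k)) := by
    have h1 : Tendsto (fun m : ℕ => 1 + (Sfun p b m - Ifun p m) / Ifun p m) atTop (nhds 1) := by
      have := (tendsto_const_nhds (x := (1:ℝ)) (f := (atTop : Filter ℕ))).add hq
      simpa using this
    have := h1.const_mul (1/k)
    simpa using this
  apply key.congr'
  filter_upwards [eventually_ge_atTop 1] with m hm
  have hIp := hIpos m hm
  have hIne : Ifun p m ≠ 0 := ne_of_gt hIp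
  field_simp
  ring

/-- For `p` a positive even integer, `k ≥ 2` and `0 < a < 1/k`, the idempotents
`f_n(x) = ∑_{0 ≤ ν < n, k ∣ ν} e^{2πiνx}` (the Dirichlet kernel `D_n` convolved
with the average of Dirac masses at the `k`-th roots of unity) satisfy
`(∫_{-a}^{a} |f_n|^p) / (∫_{-1/2}^{1/2} |f_n|^p) → 1/k` as `n → ∞`. -/
theorem ratio_tendsto_one_div_k
    (p : ℕ) (hp_even : Even p) (hp_pos : 0 < p)
    (k : ℕ) (hk : 2 ≤ k)
    (a : ℝ) (ha : 0 < a) (hak : a < 1 / k)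
    (f : ℕ → ℝ → ℂ)
    (hf : ∀ n : ℕ, ∀ x : ℝ, f n x =
      ∑ ν ∈ (Finset.range n).filter (fun ν => k ∣ ν),
        Complex.exp (2 * Real.pi * Complex.I * (ν : ℂ) * (x : ℂ))) :
    Tendsto (fun n : ℕ =>
        (∫ x in (-a)..a, ‖f n x‖ ^ p) /
          ∫ x in (-(1 / 2) : ℝ)..(1 / 2 : ℝ), ‖f n x‖ ^ p)
      atTop (nhds (1 / k)) := by
  have hk0 : 0 < k := by omega
  have hkR : (0:ℝ) < k := by exact_mod_cast hk0
  have hkne : (k:ℝ) ≠ 0 := ne_of_gt hkR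
  have hp2 : 2 ≤ p := by
    obtain ⟨t, ht⟩ := hp_even
    omega
  set b : ℝ := (k:ℝ) * a with hb
  have hb0 : 0 < b := by positivity
  have hb1 : b < 1 := by
    rw [hb]
    calc (k:ℝ) * a < (k:ℝ) * (1/(k:ℝ)) := mul_lt_mul_of_pos_left hak hkR
      _ = 1 := by field_simp
  set M : ℕ → ℕ := fun n => (n + k - 1) / k with hM
  -- `f n x = Dker (M n) (k x)`
  have hfD : ∀ (n : ℕ) (x : ℝ), f n x = Dker (M n) ((k:ℝ) * x) := by
    intro n x
    rw [hf n x, filter_eq_image (by omega : 1 ≤ k) n,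
      Finset.sum_image (fun x₁ _ x₂ _ h => Nat.eq_of_mul_eq_mul_left hk0 h)]
    unfold Dker
    refine Finset.sum_congr rfl fun j _ => ?_
    congr 1
    push_cast
    ring
  -- numerator
  have hnum : ∀ n : ℕ, (∫ x in (-a)..a, ‖f n x‖ ^ p) = (k:ℝ)⁻¹ * Sfun p b (M n) := by
    intro n
    have h1 : (∫ x in (-a)..a, ‖f n x‖ ^ p)
        = ∫ x in (-a)..a, (fun u => ‖Dker (M n) u‖ ^ p) ((k:ℝ) * x) := by
      apply intervalIntegral.integral_congr
      intro x _
      simp only [hfD n x]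
    rw [h1, intervalIntegral.integral_comp_mul_left (fun u => ‖Dker (M n) u‖ ^ p) hkne]
    rw [show (k:ℝ) * -a = -b by rw [hb]; ring, show (k:ℝ) * a = b from hb.symm, smul_eq_mul]
    rfl
  -- denominator
  have hden : ∀ n : ℕ, (∫ x in (-(1/2) : ℝ)..(1/2 : ℝ), ‖f n x‖ ^ p) = Ifun p (M n) := by
    intro n
    have h1 : (∫ x in (-(1/2) : ℝ)..(1/2 : ℝ), ‖f n x‖ ^ p)
        = ∫ x in (-(1/2) : ℝ)..(1/2 : ℝ), (fun u => ‖Dker (M n) u‖ ^ p) ((k:ℝ) * x) := by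
      apply intervalIntegral.integral_congr
      intro x _
      simp only [hfD n x]
    rw [h1, intervalIntegral.integral_comp_mul_left (fun u => ‖Dker (M n) u‖ ^ p) hkne]
    have hper : Function.Periodic (fun u => ‖Dker (M n) u‖ ^ p) 1 := fun u => by
      simp only
      rw [Dker_periodic (M n) u]
    have e1 : (k:ℝ) * (1/2) = (k:ℝ) * (-(1/2)) + (k:ℤ) • (1:ℝ) := by
      rw [zsmul_eq_mul]
      push_cast
      ring
    rw [e1, hper.intervalIntegral_add_zsmul_eq (k:ℤ) ((k:ℝ) * (-(1/2))) (Dker_int p (M n)),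
      hper.intervalIntegral_add_eq ((k:ℝ) * (-(1/2))) (-(1/2)),
      show (-(1/2) : ℝ) + 1 = 1/2 by norm_num,
      zsmul_eq_mul, smul_eq_mul]
    push_cast
    rw [← mul_assoc, inv_mul_cancel₀ hkne, one_mul]
    rfl
  -- M → ∞
  have hMtop : Tendsto M atTop atTop := by
    rw [tendsto_atTop_atTop]
    intro N
    refine ⟨k * N, fun n hn => ?_⟩
    calc N = k * N / k := (Nat.mul_div_cancel_left N hk0).symm
      _ ≤ (n + k - 1) / k := Nat.div_le_div_right (le_trans hn (by omega))
  have hR := R_tendsto p hp2 hb0 hb1 (k:ℝ) hkR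
  apply (hR.comp hMtop).congr
  intro n
  simp only [Function.comp]
  rw [hnum n, hden n]
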